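/- Let (Ω, 𝓕, P) be a probability space and U : Ω → ℝ a bounded measurable random variable that is not P-almost surely constant. For η ∈ ℝ let Q^η be the exponentially tilted probability measure with density dQ^η/dP = e^{ηU} / E_P[e^{ηU}]. Then the map η ↦ D_KL(Q^η ‖ P) is strictly increasing on (0, ∞). -/

import Mathlib

open MeasureTheory Real Filter Set Classical

/-- Kullback–Leibler divergence: `E_P[(dQ/dP) log (dQ/dP)]` if `Q ≪ P`, and `+∞` otherwise. -/
noncomputable def KLdiv {Ω : Type*} [MeasurableSpace Ω] (Q P : Measure Ω) : EReal :=
  if Q ≪ P then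
    ((∫ ω, (Q.rnDeriv P ω).toReal * Real.log (Q.rnDeriv P ω).toReal ∂P : ℝ) : EReal)
  else ⊤

/-- Bounded measurable functions are integrable w.r.t. finite measures. -/
lemma my_integrable_of_bdd {Ω : Type*} [MeasurableSpace Ω] {μ : Measure Ω} [IsFiniteMeasure μ]
    {f : Ω → ℝ} (hf : Measurable f) {C : ℝ} (h : ∀ ω, |f ω| ≤ C) : Integrable f μ :=
  Integrable.mono' (integrable_const C) hf.aestronglyMeasurable
    (Filter.Eventually.of_forall fun ω => by rw [Real.norm_eq_abs]; exact h ω)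

/-- Strict Gibbs inequality: for a probability measure and a non-a.s.-constant `g`,
`E[g] < log E[exp g]`. -/
lemma my_gibbs_strict {Ω : Type*} [MeasurableSpace Ω] (μ : Measure Ω) [IsProbabilityMeasure μ]
    {g : Ω → ℝ} (hg : Integrable g μ) (hge : Integrable (fun ω => exp (g ω)) μ)
    (hnc : ¬ ∃ c : ℝ, ∀ᵐ ω ∂μ, g ω = c) :
    ∫ ω, g ω ∂μ < Real.log (∫ ω, exp (g ω) ∂μ) := by
  have hepos : 0 < ∫ ω, exp (g ω) ∂μ := integral_exp_pos hge
  rcases strictConvexOn_exp.ae_eq_const_or_map_average_lt continuous_exp.continuousOn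
      isClosed_univ (Filter.Eventually.of_forall fun _ => Set.mem_univ _) hg
      (by exact hge) with h | h
  · exact absurd ⟨_, h⟩ hnc
  · rw [average_eq_integral, average_eq_integral] at h
    rw [Real.lt_log_iff_exp_lt hepos]
    simpa [Function.comp] using h

section Aux

variable {Ω : Type*} [MeasurableSpace Ω] (P : Measure Ω) [IsProbabilityMeasure P]
  (U : Ω → ℝ)

/-- Integrability of the exponential of a scalar multiple of a bounded function. -/
lemma my_exp_integrable {μ : Measure Ω} [IsFiniteMeasure μ] (hU : Measurable U) {C : ℝ}
    (hC : ∀ ω, |U ω| ≤ C) (η : ℝ) : Integrable (fun ω => exp (η * U ω)) μ := by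
  refine my_integrable_of_bdd ((hU.const_mul η).exp) (C := exp (|η| * C)) fun ω => ?_
  rw [abs_of_pos (exp_pos _)]
  refine exp_le_exp.2 ((le_abs_self _).trans ?_)
  rw [abs_mul]
  exact mul_le_mul_of_nonneg_left (hC ω) (abs_nonneg η)

/-- The strict Gibbs inequality between two tilted measures. -/
lemma my_gibbs_tilted (hU : Measurable U) {C : ℝ} (hC : ∀ ω, |U ω| ≤ C)
    (hnc : ¬ ∃ c : ℝ, ∀ᵐ ω ∂P, U ω = c) {s t : ℝ} (hst : s ≠ t) :
    (t - s) * ∫ ω, U ω ∂(P.tilted fun ω => s * U ω) <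
      Real.log (∫ ω, exp (t * U ω) ∂P) - Real.log (∫ ω, exp (s * U ω) ∂P) := by
  have hexp : ∀ η : ℝ, Integrable (fun ω => exp (η * U ω)) P :=
    fun η => my_exp_integrable U hU hC η
  haveI : IsProbabilityMeasure (P.tilted fun ω => s * U ω) :=
    isProbabilityMeasure_tilted (hexp s)
  have hUt : Integrable U (P.tilted fun ω => s * U ω) := my_integrable_of_bdd hU hC
  have hget : Integrable (fun ω => exp ((t - s) * U ω)) (P.tilted fun ω => s * U ω) :=
    my_exp_integrable U hU hC (t - s)
  have hnc' : ¬ ∃ c : ℝ, ∀ᵐ ω ∂(P.tilted fun ω => s * U ω), (t - s) * U ω = c := by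
    rintro ⟨c, hc⟩
    have hP : ∀ᵐ ω ∂P, (t - s) * U ω = c :=
      (absolutelyContinuous_tilted (hexp s)).ae_le hc
    refine hnc ⟨c / (t - s), ?_⟩
    filter_upwards [hP] with ω hω
    rw [eq_div_iff (sub_ne_zero.2 (Ne.symm hst))]
    linarith [hω]
  have key := my_gibbs_strict _ ((hUt.const_mul (t - s))) hget hnc'
  rw [integral_const_mul] at key
  have hZ : ∫ ω, exp ((t - s) * U ω) ∂(P.tilted fun ω => s * U ω)
      = (∫ ω, exp (t * U ω) ∂P) / ∫ ω, exp (s * U ω) ∂P := by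
    have := integral_exp_tilted (μ := P) (fun ω => s * U ω) (fun ω => (t - s) * U ω)
    rw [this]
    congr 1
    refine integral_congr_ae (Filter.Eventually.of_forall fun ω => ?_)
    simp only [Pi.add_apply]
    ring_nf
  rw [hZ, Real.log_div (integral_exp_pos (hexp t)).ne' (integral_exp_pos (hexp s)).ne'] at key
  exact key

/-- The value of the KL divergence of a tilted measure. -/
lemma my_KL_eq (hU : Measurable U) {C : ℝ} (hC : ∀ ω, |U ω| ≤ C) (η : ℝ) :
    KLdiv (P.tilted fun ω => η * U ω) P
      = ((η * ∫ ω, U ω ∂(P.tilted fun ω => η * U ω)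
          - Real.log (∫ ω, exp (η * U ω) ∂P) : ℝ) : EReal) := by
  have hexp : Integrable (fun ω => exp (η * U ω)) P := my_exp_integrable U hU hC η
  haveI : IsProbabilityMeasure (P.tilted fun ω => η * U ω) :=
    isProbabilityMeasure_tilted hexp
  have hUt : Integrable U (P.tilted fun ω => η * U ω) := my_integrable_of_bdd hU hC
  rw [KLdiv, if_pos (tilted_absolutelyContinuous P _)]
  congr 1
  set Z : ℝ := ∫ ω, exp (η * U ω) ∂P with hZdef
  have hZpos : 0 < Z := integral_exp_pos hexp
  have h1 := rnDeriv_tilted_left_self (μ := P) ((hU.const_mul η).aemeasurable)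
  have h2 := log_rnDeriv_tilted_left_self (μ := P) hexp
  have heq : (fun ω => (((P.tilted fun ω => η * U ω)).rnDeriv P ω).toReal
        * Real.log (((P.tilted fun ω => η * U ω)).rnDeriv P ω).toReal)
      =ᵐ[P] fun ω => (exp (η * U ω) / Z) • (η * U ω - Real.log Z) := by
    filter_upwards [h1, h2] with ω h1ω h2ω
    rw [h2ω, h1ω, ENNReal.toReal_ofReal (by positivity), smul_eq_mul]
  rw [integral_congr_ae heq, ← integral_tilted (fun ω => η * U ω) (fun ω => η * U ω - Real.log Z),
    integral_sub (hUt.const_mul η) (integrable_const _), integral_const_mul, integral_const,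
    probReal_univ, one_smul]

end Aux

/-- For a bounded random variable `U` that is not `P`-a.s. constant, the map
`η ↦ D_KL(Q^η ‖ P)` is strictly increasing on `(0, ∞)`, where `Q^η` is the exponential
tilting of `P` by `ηU`. -/
theorem klDiv_tilted_strictMonoOn
    {Ω : Type*} [MeasurableSpace Ω] (P : Measure Ω) [IsProbabilityMeasure P]
    (U : Ω → ℝ) (hU : Measurable U) (hbd : ∃ C : ℝ, ∀ ω, |U ω| ≤ C)
    (hnc : ¬ ∃ c : ℝ, ∀ᵐ ω ∂P, U ω = c) :
    StrictMonoOn (fun η : ℝ => KLdiv (P.tilted fun ω => η * U ω) P) (Set.Ioi 0) := by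
  obtain ⟨C, hC⟩ := hbd
  intro a ha b hb hab
  have ha' : (0 : ℝ) < a := ha
  simp only
  rw [my_KL_eq P U hU hC a, my_KL_eq P U hU hC b, EReal.coe_lt_coe_iff]
  set ma : ℝ := ∫ ω, U ω ∂(P.tilted fun ω => a * U ω)
  set mb : ℝ := ∫ ω, U ω ∂(P.tilted fun ω => b * U ω)
  set La : ℝ := Real.log (∫ ω, exp (a * U ω) ∂P)
  set Lb : ℝ := Real.log (∫ ω, exp (b * U ω) ∂P)
  have h1 : (b - a) * ma < Lb - La := my_gibbs_tilted P U hU hC hnc hab.ne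
  have h2 : (a - b) * mb < La - Lb := my_gibbs_tilted P U hU hC hnc hab.ne'
  have hm : ma < mb := by nlinarith
  nlinarith [mul_pos ha' (sub_pos.2 hm)]
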